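/- The string matching function toSM, mapping a string x to the pair (x, makeIndices x tg 0 (length x - 1)), is a monoid morphism: toSM [] = ([], []) and toSM (x ++ y) = toSM x <> toSM y, where (x, xis) <> (y, yis) = (x ++ y, xis ++ makeNewIndices x y tg ++ map (+ length x) yis). Equivalently, makeIndices (x ++ y) tg 0 (length (x ++ y) - 1) = makeIndices x tg 0 (length x - 1) ++ makeNewIndices x y tg ++ map (+ length x) (makeIndices y tg 0 (length y - 1)). -/

import Mathlib

/-- `subString o l s = take l (drop o s)` -/
def subString (o l : ℕ) (s : List Char) : List Char := (s.drop o).take l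

/-- `i` is a good index of `s` for target `tg`. -/
def goodIndex (s tg : List Char) (i : ℕ) : Prop :=
  subString i tg.length s = tg ∧ i + tg.length ≤ s.length

instance (s tg : List Char) (i : ℕ) : Decidable (goodIndex s tg i) := by
  unfold goodIndex; exact instDecidableAnd

/-- Collect all good indices of `s` for `tg` in the range `[lo, hi]`. -/
def makeIndices (s tg : List Char) (lo : ℕ) (hi : ℤ) : List ℕ :=
  if hi < lo then []
  else if goodIndex s tg lo then lo :: makeIndices s tg (lo + 1) hi
  else makeIndices s tg (lo + 1) hi
termination_by (hi + 1 - lo).toNat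
decreasing_by all_goals (rename_i h _; omega)

def makeNewIndices (sl sr tg : List Char) : List ℕ :=
  if 2 ≤ tg.length then
    makeIndices (sl ++ sr) tg (max (sl.length - (tg.length - 1)) 0)
      ((sl.length : ℤ) - 1)
  else []

theorem makeIndices_eq_filter (s tg : List Char) : ∀ (n : ℕ) (lo : ℕ) (hi : ℤ),
    n = (hi + 1 - lo).toNat →
    makeIndices s tg lo hi =
      (List.range' lo n).filter (fun i => decide (goodIndex s tg i)) := by
  intro n
  induction n with
  | zero => intro lo hi h; rw [makeIndices]; rw [if_pos (by omega)]; rfl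
  | succ n ih =>
    intro lo hi h
    rw [makeIndices, if_neg (by omega), List.range'_succ, List.filter_cons]
    rw [ih (lo+1) hi (by omega)]
    by_cases hg : goodIndex s tg lo
    · rw [if_pos hg]; simp [hg]
    · rw [if_neg hg]; simp [hg]

theorem goodIndex_left {x y tg : List Char} {i : ℕ} (h : i + tg.length ≤ x.length) :
    goodIndex (x ++ y) tg i ↔ goodIndex x tg i := by
  unfold goodIndex subString
  rw [List.drop_append_of_le_length (by omega),
      List.take_append_of_le_length (by simp [List.length_drop]; omega)]
  simp; omega

theorem goodIndex_right (x y tg : List Char) (i : ℕ) :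
    goodIndex (x ++ y) tg (i + x.length) ↔ goodIndex y tg i := by
  unfold goodIndex subString
  rw [add_comm i x.length, List.drop_append]
  simp [List.drop_of_length_le (show x.length ≤ x.length + i by omega)]; omega

theorem makeNewIndices_eq_filter (x y tg : List Char) :
    makeNewIndices x y tg =
      (List.range' (x.length - (tg.length - 1)) (x.length - (x.length - (tg.length - 1)))).filter
        (fun i => decide (goodIndex (x ++ y) tg i)) := by
  set m := x.length - (tg.length - 1) with hm
  unfold makeNewIndices
  by_cases h : 2 ≤ tg.length
  · rw [if_pos h, makeIndices_eq_filter _ _ (x.length - m) (max m 0) ((x.length : ℤ) - 1)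
      (by omega)]
    simp
  · rw [if_neg h]
    have : x.length - m = 0 := by omega
    rw [this]; rfl

theorem range'_split (a b : ℕ) :
    List.range' 0 (a + b) = List.range' 0 a ++ List.range' a b := by
  have := List.range'_append (s := 0) (m := a) (n := b) (step := 1)
  simp only [Nat.one_mul, Nat.zero_add] at this
  rw [← this]

/-- The string-matcher operation on pairs (string, index list). -/
def smOp (tg : List Char) (a b : List Char × List ℕ) : List Char × List ℕ :=
  (a.1 ++ b.1, a.2 ++ makeNewIndices a.1 b.1 tg ++ b.2.map (· + a.1.length))

/-- The string matching function. -/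
def toSM (tg x : List Char) : List Char × List ℕ :=
  (x, makeIndices x tg 0 ((x.length : ℤ) - 1))

/-- `toSM` is a monoid morphism. -/
theorem toSM_morphism (tg : List Char) (x y : List Char) :
    toSM tg [] = ([], []) ∧
    toSM tg (x ++ y) = smOp tg (toSM tg x) (toSM tg y) := by
  constructor
  · unfold toSM
    simp only [List.length_nil, Nat.cast_zero, zero_sub]
    rw [makeIndices_eq_filter _ _ 0 0 (-1) (by omega)]
    rfl
  · unfold toSM smOp
    simp only [Prod.mk.injEq, true_and]
    rw [makeIndices_eq_filter (x ++ y) tg ((x ++ y).length) 0 (((x ++ y).length : ℤ) - 1)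
          (by omega),
        makeIndices_eq_filter x tg (x.length) 0 ((x.length : ℤ) - 1) (by omega),
        makeIndices_eq_filter y tg (y.length) 0 ((y.length : ℤ) - 1) (by omega),
        makeNewIndices_eq_filter]
    set L := tg.length with hL
    set m := x.length - (L - 1) with hm
    set p := fun i => decide (goodIndex (x ++ y) tg i) with hp
    set q := fun i => decide (goodIndex x tg i) with hq
    set r := fun i => decide (goodIndex y tg i) with hr
    have hmx : m ≤ x.length := by omega
    have hsplit : List.range' 0 (x ++ y).length =
        (List.range' 0 m ++ List.range' m (x.length - m)) ++ List.range' x.length y.length := by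
      rw [List.length_append, range'_split x.length y.length,
          show x.length = m + (x.length - m) by omega, range'_split m (x.length - m)]
      simp [Nat.add_sub_cancel_left]
    rw [hsplit, List.filter_append, List.filter_append]
    congr 1
    congr 1
    · -- filter p (range' 0 m) = filter q (range' 0 x.length)
      have h1 : List.filter p (List.range' 0 m) = List.filter q (List.range' 0 m) := by
        apply List.filter_congr
        intro i hi
        rw [List.mem_range'_1] at hi
        simp only [hp, hq, decide_eq_decide]
        exact goodIndex_left (by omega)
      have h2 : List.filter q (List.range' m (x.length - m)) = [] := by
        rw [List.filter_eq_nil_iff]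
        intro i hi
        rw [List.mem_range'_1] at hi
        simp only [hq, decide_eq_true_eq]
        intro hg
        have := hg.2
        omega
      rw [h1, show x.length = m + (x.length - m) by omega, range'_split,
          List.filter_append, h2, List.append_nil]
    · -- filter p (range' x.length y.length) = map (+x.length) (filter r (range' 0 y.length))
      have h1 : List.range' x.length y.length =
          (List.range' 0 y.length).map (· + x.length) := by
        rw [List.range'_eq_map_range, List.range'_eq_map_range, List.map_map]
        apply List.map_congr_left
        intro i _
        simp [Nat.add_comm]
      rw [h1, List.filter_map]
      congr 1
      apply List.filter_congr
      intro i _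
      simp only [Function.comp, hp, hr, decide_eq_decide]
      exact goodIndex_right x y tg i
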